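/- If |v⟩ is a unit vector and A is a positive semidefinite operator with Tr A = 1, then the positive part of |v⟩⟨v| − A has rank at most 1, and consequently ‖|v⟩⟨v| − A‖₁ = 2‖|v⟩⟨v| − A‖_∞. -/

import Mathlib

open Matrix Kronecker BigOperators
open scoped ComplexOrder

/-- The old Mathlib `Matrix.PosSemidef.sqrt` (removed upstream), with its original definition. -/
noncomputable def Matrix.PosSemidef.sqrt {n 𝕜 : Type*} [Fintype n] [RCLike 𝕜] [DecidableEq n]
    {A : Matrix n n 𝕜} (hA : Matrix.PosSemidef A) : Matrix n n 𝕜 :=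
  hA.1.eigenvectorUnitary.1 * Matrix.diagonal ((↑) ∘ (Real.sqrt ∘ hA.1.eigenvalues)) *
    (star hA.1.eigenvectorUnitary : Matrix n n 𝕜)

/-- Trace norm (Schatten 1-norm): `Tr √(XᴴX)`. -/
noncomputable def traceNorm {m n : Type*} [Fintype m] [Fintype n] [DecidableEq n]
    (X : Matrix m n ℂ) : ℝ :=
  ((Matrix.posSemidef_conjTranspose_mul_self X).sqrt.trace).re

open scoped MatrixOrder in
lemma psd_sqrt_eq_cfc_sqrt {n : Type*} [Fintype n] [DecidableEq n] {A : Matrix n n ℂ}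
    (hA : A.PosSemidef) : hA.sqrt = CFC.sqrt A := by
  rw [CFC.sqrt_eq_cfc, cfc_nnreal_eq_real _ A hA.nonneg, hA.1.cfc_eq]
  simp only [Matrix.IsHermitian.cfc, Unitary.conjStarAlgAut_apply, Matrix.PosSemidef.sqrt]
  congr 3
  funext i
  simp [max_eq_left (hA.eigenvalues_nonneg i)]

open scoped MatrixOrder in
lemma psd_eq_sqrt_of_sq_eq {n : Type*} [Fintype n] [DecidableEq n] {A B : Matrix n n ℂ}
    (hA : A.PosSemidef) (hB : B.PosSemidef) (h : B ^ 2 = A) : B = hA.sqrt := by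
  rw [psd_sqrt_eq_cfc_sqrt]
  exact (CFC.sqrt_unique ((sq B).symm.trans h) hB.nonneg).symm

/-- Auxiliary real fact: if a finite family of reals sums to zero and has at most one
positive member, then the sum of absolute values is twice the supremum of absolute values. -/
lemma aux_sum_abs {ι : Type*} [Fintype ι] [Nonempty ι]
    (l : ι → ℝ) (hsum : ∑ i, l i = 0)
    (huniq : ∀ i j, 0 < l i → 0 < l j → i = j) :
    ∑ i, |l i| = 2 * ⨆ i, |l i| := by
  classical
  have hbdd : BddAbove (Set.range fun i => |l i|) := (Set.finite_range _).bddAbove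
  set t := ⨆ i, |l i| with ht
  set pos : ℝ := ∑ i, max (l i) 0 with hpos
  have h1 : ∑ i, |l i| = 2 * pos := by
    have habs : ∀ i : ι, |l i| = 2 * max (l i) 0 - l i := by
      intro i
      rcases le_total (l i) 0 with h | h
      · rw [abs_of_nonpos h, max_eq_right h]; ring
      · rw [abs_of_nonneg h, max_eq_left h]; ring
    calc ∑ i, |l i| = ∑ i, (2 * max (l i) 0 - l i) :=
          Finset.sum_congr rfl fun i _ => habs i
      _ = 2 * pos := by
          rw [Finset.sum_sub_distrib, ← Finset.mul_sum, hsum, sub_zero]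
  have hle : ∀ i, |l i| ≤ pos := by
    intro i
    rcases le_total 0 (l i) with h | h
    · rw [abs_of_nonneg h]
      calc l i = max (l i) 0 := (max_eq_left h).symm
        _ ≤ pos := Finset.single_le_sum (f := fun j => max (l j) 0)
            (fun j _ => le_max_right _ _) (Finset.mem_univ i)
    · rw [abs_of_nonpos h]
      have he : -l i = ∑ j ∈ Finset.univ.erase i, l j := by
        have h2 := Finset.sum_erase_add Finset.univ l (Finset.mem_univ i)
        rw [hsum] at h2
        linarith
      rw [he]
      calc (∑ j ∈ Finset.univ.erase i, l j) ≤ ∑ j ∈ Finset.univ.erase i, max (l j) 0 :=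
            Finset.sum_le_sum fun j _ => le_max_left _ _
        _ ≤ pos := Finset.sum_le_sum_of_subset_of_nonneg (Finset.erase_subset _ _)
            (fun j _ _ => le_max_right _ _)
  have h3 : t ≤ pos := ciSup_le hle
  have h2 : pos ≤ t := by
    by_cases hex : ∃ i, 0 < l i
    · obtain ⟨i, hi⟩ := hex
      have hp : pos = max (l i) 0 := by
        refine Finset.sum_eq_single_of_mem i (Finset.mem_univ i) fun j _ hj => ?_
        exact max_eq_right (le_of_not_gt fun hjpos => hj (huniq j i hjpos hi))
      rw [hp, max_eq_left hi.le]
      exact (le_abs_self _).trans (le_ciSup hbdd i)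
    · push_neg at hex
      have hp : pos = 0 := Finset.sum_eq_zero fun i _ => max_eq_right (hex i)
      rw [hp]
      obtain ⟨i⟩ := (inferInstance : Nonempty ι)
      exact (abs_nonneg (l i)).trans (le_ciSup hbdd i)
  rw [h1, le_antisymm h3 h2]

/-- if `|v⟩` is a unit vector and `A` is PSD with `Tr A = 1`, then the
positive part of `|v⟩⟨v| − A` has rank at most 1, and consequently
`‖|v⟩⟨v| − A‖₁ = 2 ‖|v⟩⟨v| − A‖_∞` (the operator norm of a Hermitian matrix being the
largest absolute value of an eigenvalue). -/
theorem traceNorm_proj_sub_posSemidef {d : ℕ}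
    (v : Fin d → ℂ) (hv : ∑ i, ‖v i‖^2 = 1)
    (A : Matrix (Fin d) (Fin d) ℂ) (hA : A.PosSemidef) (hAtr : A.trace = 1) :
    (∃ P N : Matrix (Fin d) (Fin d) ℂ, P.PosSemidef ∧ N.PosSemidef ∧
        Matrix.vecMulVec v (star v) - A = P - N ∧ P * N = 0 ∧ P.rank ≤ 1) ∧
    ∀ (hH : (Matrix.vecMulVec v (star v) - A).IsHermitian),
      traceNorm (Matrix.vecMulVec v (star v) - A) = 2 * ⨆ i, |hH.eigenvalues i| := by
  classical
  rcases Nat.eq_zero_or_pos d with rfl | hd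
  · simp at hv
  haveI : Nonempty (Fin d) := Fin.pos_iff_nonempty.mp hd
  set M := Matrix.vecMulVec v (star v) - A with hMdef
  have hvvherm : (Matrix.vecMulVec v (star v)).IsHermitian := by
    ext i j
    simp [Matrix.conjTranspose_apply, Matrix.vecMulVec_apply, mul_comm]
  have hM : M.IsHermitian := hvvherm.sub hA.1
  -- the quadratic form of `M` is nonpositive on the orthogonal complement of `v`
  have hquad : ∀ w : Fin d → ℂ, star v ⬝ᵥ w = 0 → star w ⬝ᵥ (M *ᵥ w) ≤ 0 := by
    intro w hw
    have h1 : Matrix.vecMulVec v (star v) *ᵥ w = 0 := by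
      ext i
      simp only [Matrix.mulVec, dotProduct, Matrix.vecMulVec_apply, Pi.zero_apply,
        mul_assoc, ← Finset.mul_sum]
      rw [show (∑ j, star v j * w j) = star v ⬝ᵥ w from rfl, hw, mul_zero]
    rw [hMdef, Matrix.sub_mulVec, h1, zero_sub, dotProduct_neg]
    exact neg_nonpos.mpr (hA.dotProduct_mulVec_nonneg w)
  -- orthonormality of the eigenvector basis, in dot-product language
  have horth : ∀ a b, star (⇑(hM.eigenvectorBasis a)) ⬝ᵥ ⇑(hM.eigenvectorBasis b)
      = if a = b then 1 else 0 := by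
    intro a b
    rw [dotProduct_comm, ← EuclideanSpace.inner_eq_star_dotProduct]
    exact orthonormal_iff_ite.mp hM.eigenvectorBasis.orthonormal a b
  set l := hM.eigenvalues with hl
  set u := hM.eigenvectorBasis with hu
  -- M has at most one positive eigenvalue
  have huniq : ∀ i j, 0 < l i → 0 < l j → i = j := by
    have hcon : ∀ a : Fin d, 0 < l a → star v ⬝ᵥ ⇑(u a) ≠ 0 := by
      intro a ha hav
      have h1 := hquad _ hav
      have h2 : star ⇑(u a) ⬝ᵥ (M *ᵥ ⇑(u a)) = ((l a : ℝ) : ℂ) := by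
        rw [hM.mulVec_eigenvectorBasis]
        rw [dotProduct_smul]
        rw [horth a a]
        simp [hl]
      rw [h2] at h1
      have : (l a : ℝ) ≤ 0 := by exact_mod_cast h1
      linarith
    intro i j hi hj
    by_contra hij
    set α := star v ⬝ᵥ ⇑(u i) with hα
    set β := star v ⬝ᵥ ⇑(u j) with hβ
    have hαne : α ≠ 0 := hcon i hi
    have hβne : β ≠ 0 := hcon j hj
    set w : Fin d → ℂ := β • ⇑(u i) - α • ⇑(u j) with hw
    have hvw : star v ⬝ᵥ w = 0 := by
      simp only [hw, dotProduct_sub, dotProduct_smul, smul_eq_mul, ← hα, ← hβ]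
      ring
    have hq := hquad w hvw
    have key : star w ⬝ᵥ (M *ᵥ w)
        = ((l i * Complex.normSq β + l j * Complex.normSq α : ℝ) : ℂ) := by
      simp only [hw, Matrix.mulVec_sub, Matrix.mulVec_smul,
        (show M *ᵥ ⇑(u i) = (l i) • ⇑(u i) from hM.mulVec_eigenvectorBasis i),
        (show M *ᵥ ⇑(u j) = (l j) • ⇑(u j) from hM.mulVec_eigenvectorBasis j),
        star_sub, star_smul, sub_dotProduct, dotProduct_sub,
        smul_dotProduct, dotProduct_smul, horth, ← hl]
      simp only [if_true, smul_eq_mul, mul_zero, mul_one, sub_zero, zero_sub, Complex.real_smul,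
        RCLike.star_def, smul_zero, sub_neg_eq_add]
      rw [if_neg (show ¬j = i from fun h => hij h.symm), if_neg hij]
      push_cast
      rw [Complex.normSq_eq_conj_mul_self, Complex.normSq_eq_conj_mul_self]
      ring
    rw [key] at hq
    have hr : (l i * Complex.normSq β + l j * Complex.normSq α : ℝ) ≤ 0 := by exact_mod_cast hq
    have h1 : 0 < l i * Complex.normSq β := mul_pos hi (Complex.normSq_pos.mpr hβne)
    have h2 : 0 < l j * Complex.normSq α := mul_pos hj (Complex.normSq_pos.mpr hαne)
    linarith
  -- spectral data
  set U : Matrix (Fin d) (Fin d) ℂ := (hM.eigenvectorUnitary : Matrix (Fin d) (Fin d) ℂ) with hU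
  have hUU : star U * U = 1 := Matrix.mem_unitaryGroup_iff'.mp hM.eigenvectorUnitary.2
  constructor
  · -- construction of the positive and negative parts
    set Dp : Matrix (Fin d) (Fin d) ℂ := Matrix.diagonal fun i => ((max (l i) 0 : ℝ) : ℂ) with hDp
    set Dn : Matrix (Fin d) (Fin d) ℂ := Matrix.diagonal fun i => ((max (-l i) 0 : ℝ) : ℂ) with hDn
    refine ⟨U * Dp * star U, U * Dn * star U, ?_, ?_, ?_, ?_, ?_⟩
    · rw [Matrix.star_eq_conjTranspose]
      exact (Matrix.posSemidef_diagonal_iff.mpr fun i =>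
        Complex.zero_le_real.mpr (le_max_right _ _)).mul_mul_conjTranspose_same U
    · rw [Matrix.star_eq_conjTranspose]
      exact (Matrix.posSemidef_diagonal_iff.mpr fun i =>
        Complex.zero_le_real.mpr (le_max_right _ _)).mul_mul_conjTranspose_same U
    · have hfun : ∀ i, ((max (l i) 0 : ℝ) : ℂ) - ((max (-l i) 0 : ℝ) : ℂ) = RCLike.ofReal (l i) := by
        intro i
        show _ = ((l i : ℝ) : ℂ)
        rcases le_total (l i) 0 with h | h
        · rw [max_eq_right h, max_eq_left (by linarith : (0:ℝ) ≤ -l i)]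
          push_cast; ring
        · rw [max_eq_left h, max_eq_right (by linarith : -l i ≤ 0)]
          push_cast; ring
      have hdiff : Dp - Dn = Matrix.diagonal (RCLike.ofReal ∘ l) := by
        rw [hDp, hDn, Matrix.diagonal_sub]
        exact congrArg Matrix.diagonal (funext fun i => hfun i)
      rw [← Matrix.sub_mul, ← Matrix.mul_sub, hdiff]
      exact hM.spectral_theorem
    · have hDD : Dp * Dn = 0 := by
        rw [hDp, hDn, Matrix.diagonal_mul_diagonal]
        have : (fun i => ((max (l i) 0 : ℝ) : ℂ) * ((max (-l i) 0 : ℝ) : ℂ)) = fun _ => (0:ℂ) := by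
          funext i
          rcases le_total (l i) 0 with h | h
          · rw [max_eq_right h]; simp
          · rw [max_eq_right (by linarith : -l i ≤ 0)]; simp
        rw [this, Matrix.diagonal_zero]
      have hassoc : U * Dp * star U * (U * Dn * star U) = U * (Dp * Dn) * star U := by
        simp only [Matrix.mul_assoc]
        rw [← Matrix.mul_assoc (star U) U (Dn * star U), hUU, Matrix.one_mul]
      rw [hassoc, hDD, Matrix.mul_zero, Matrix.zero_mul]
    · calc (U * Dp * star U).rank ≤ (U * Dp).rank := Matrix.rank_mul_le_left _ _
        _ ≤ Dp.rank := Matrix.rank_mul_le_right _ _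
        _ = Fintype.card {i // ((max (l i) 0 : ℝ) : ℂ) ≠ 0} := Matrix.rank_diagonal _
        _ ≤ 1 := by
            rw [Fintype.card_le_one_iff]
            rintro ⟨a, ha⟩ ⟨b, hb⟩
            have ha' : 0 < l a := by
              rcases lt_or_ge 0 (l a) with h | h
              · exact h
              · exact absurd (by rw [max_eq_right h]; norm_num :
                  ((max (l a) 0 : ℝ) : ℂ) = 0) ha
            have hb' : 0 < l b := by
              rcases lt_or_ge 0 (l b) with h | h
              · exact h
              · exact absurd (by rw [max_eq_right h]; norm_num :
                  ((max (l b) 0 : ℝ) : ℂ) = 0) hb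
            exact Subtype.ext (huniq a b ha' hb')
  · -- the trace-norm identity
    intro hH
    have htrM : M.trace = 0 := by
      have hz : ∀ z : ℂ, z * star z = ((‖z‖^2 : ℝ) : ℂ) := by
        intro z
        rw [RCLike.star_def, Complex.mul_conj, Complex.normSq_eq_norm_sq]
      have h1 : (Matrix.vecMulVec v (star v)).trace = ∑ i, ((‖v i‖^2 : ℝ) : ℂ) := by
        rw [Matrix.trace]
        refine Finset.sum_congr rfl fun i _ => ?_
        exact hz (v i)
      rw [hMdef, Matrix.trace_sub, hAtr, h1, ← Complex.ofReal_sum, hv]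
      norm_num
    set B : Matrix (Fin d) (Fin d) ℂ := U * Matrix.diagonal (fun i => ((|l i| : ℝ) : ℂ)) * star U
      with hB
    have hBpsd : B.PosSemidef := by
      rw [hB, Matrix.star_eq_conjTranspose]
      exact (Matrix.posSemidef_diagonal_iff.mpr fun i =>
        Complex.zero_le_real.mpr (abs_nonneg _)).mul_mul_conjTranspose_same U
    have hB2 : B ^ 2 = Mᴴ * M := by
      have hMM : Mᴴ * M
          = U * Matrix.diagonal (fun i => ((l i : ℝ) : ℂ) * ((l i : ℝ) : ℂ)) * star U := by
        rw [hM.eq]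
        conv_lhs => rw [hM.spectral_theorem, Unitary.conjStarAlgAut_apply]
        simp only [Matrix.mul_assoc]
        rw [← Matrix.mul_assoc (star U) U, hUU, Matrix.one_mul,
          ← Matrix.mul_assoc (Matrix.diagonal _) (Matrix.diagonal _),
          Matrix.diagonal_mul_diagonal]
        rfl
      rw [pow_two, hB, hMM]
      simp only [Matrix.mul_assoc]
      rw [← Matrix.mul_assoc (star U) U, hUU, Matrix.one_mul,
        ← Matrix.mul_assoc (Matrix.diagonal _) (Matrix.diagonal _), Matrix.diagonal_mul_diagonal]
      have habs2 : (fun i => ((|l i| : ℝ) : ℂ) * ((|l i| : ℝ) : ℂ))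
          = fun i => ((l i : ℝ) : ℂ) * ((l i : ℝ) : ℂ) := by
        funext i
        rw [← Complex.ofReal_mul, ← Complex.ofReal_mul, abs_mul_abs_self]
      rw [habs2]
    have hBsqrt : B = (Matrix.posSemidef_conjTranspose_mul_self M).sqrt :=
      psd_eq_sqrt_of_sq_eq _ hBpsd hB2
    have htrB : B.trace = ((∑ i, |l i| : ℝ) : ℂ) := by
      rw [hB, Matrix.trace_mul_cycle, hUU, Matrix.one_mul, Matrix.trace_diagonal]
      exact (Complex.ofReal_sum _ _).symm
    have htr0 : ∑ i, l i = 0 := by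
      have h2 : M.trace = ((∑ i, l i : ℝ) : ℂ) := by
        conv_lhs => rw [hM.spectral_theorem, Unitary.conjStarAlgAut_apply]
        rw [Matrix.trace_mul_cycle, hUU, Matrix.one_mul, Matrix.trace_diagonal]
        exact (Complex.ofReal_sum _ _).symm
      rw [htrM] at h2
      exact_mod_cast h2.symm
    show traceNorm M = 2 * ⨆ i, |hH.eigenvalues i|
    rw [traceNorm, ← hBsqrt, htrB, Complex.ofReal_re]
    exact aux_sum_abs l htr0 huniq
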